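/- Let α ∈ (0,1) and let Y be an integrable real-valued random variable with a unique α-quantile. Let G₂ : ℝ → ℝ be convex with subgradient G₂′ and let G₁ : ℝ → ℝ be such that for every 𝔞₂ ∈ ℝ the map x ↦ G₁(x) − (x/(1−α)) G₂′(𝔞₂) is increasing, and assume E|G₁(Y)| < ∞ and E|G₂(Y)| < ∞. Define, for 𝔞₁ ≤ 𝔞₂, the scoring function S(𝔞₁, 𝔞₂, y) := (1{y ≤ 𝔞₁} − α)(G₁(𝔞₁) − G₁(y)) − G₂(𝔞₂) + G₂(y) + G₂′(𝔞₂)[ 𝔞₂ + (1/(1−α))( (1{y > 𝔞₁} − (1−α)) 𝔞₁ − 1{y > 𝔞₁} y ) ]. Then S is consistent for the pair (VaR_α, CVaR_α): E[S(VaR_α(Y), CVaR_α(Y), Y)] ≤ E[S(𝔞₁, 𝔞₂, Y)] for all (𝔞₁, 𝔞₂) ∈ ℝ² with 𝔞₁ ≤ 𝔞₂. -/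

import Mathlib

open MeasureTheory ProbabilityTheory Set Filter Topology

/-- Value-at-risk at level `α` of the loss `X`: the `α`-quantile
`VaR_α(X) = inf {x : P(X ≤ x) ≥ α}`. -/
noncomputable def VaR {Ω : Type*} [MeasurableSpace Ω] (P : Measure Ω) (X : Ω → ℝ) (α : ℝ) : ℝ :=
  sInf {x : ℝ | α ≤ (P {ω | X ω ≤ x}).toReal}

/-- Conditional value-at-risk: `CVaR_α(X) = (1-α)⁻¹ ∫_α^1 VaR_u(X) du`. -/
noncomputable def CVaR {Ω : Type*} [MeasurableSpace Ω] (P : Measure Ω) (X : Ω → ℝ) (α : ℝ) : ℝ :=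
  (1 - α)⁻¹ * ∫ u in α..1, VaR P X u

/-- `q` is an `α`-quantile of `Y`: `P(Y < q) ≤ α ≤ P(Y ≤ q)`. -/
def IsQuantile {Ω : Type*} [MeasurableSpace Ω] (P : Measure Ω) (Y : Ω → ℝ) (α q : ℝ) : Prop :=
  (P {ω | Y ω < q}).toReal ≤ α ∧ α ≤ (P {ω | Y ω ≤ q}).toReal

section FZAux

variable {Ω : Type*} [MeasurableSpace Ω] {P : Measure Ω} [IsProbabilityMeasure P] {Y : Ω → ℝ}

lemma fz_cdf_eq (hYm : Measurable Y) (x : ℝ) :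
    cdf (P.map Y) x = (P {ω | Y ω ≤ x}).toReal := by
  haveI : IsProbabilityMeasure (P.map Y) := Measure.isProbabilityMeasure_map hYm.aemeasurable
  rw [cdf_eq_real, measureReal_def, Measure.map_apply hYm measurableSet_Iic]
  rfl

lemma fz_ofReal_cdf (hYm : Measurable Y) (x : ℝ) :
    ENNReal.ofReal (cdf (P.map Y) x) = P {ω | Y ω ≤ x} := by
  haveI : IsProbabilityMeasure (P.map Y) := Measure.isProbabilityMeasure_map hYm.aemeasurable
  rw [ofReal_cdf, Measure.map_apply hYm measurableSet_Iic]
  rfl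

lemma fz_var_set (hYm : Measurable Y) (u : ℝ) :
    {x : ℝ | u ≤ (P {ω | Y ω ≤ x}).toReal} = {x : ℝ | u ≤ cdf (P.map Y) x} := by
  ext x; rw [mem_setOf_eq, mem_setOf_eq, fz_cdf_eq hYm]

lemma fz_var_le_iff (hYm : Measurable Y) {u : ℝ} (hu0 : 0 < u) (hu1 : u < 1) (t : ℝ) :
    VaR P Y u ≤ t ↔ u ≤ cdf (P.map Y) t := by
  have hne : {x : ℝ | u ≤ cdf (P.map Y) x}.Nonempty := by
    obtain ⟨x, hx⟩ := ((tendsto_cdf_atTop (P.map Y)).eventually (eventually_ge_nhds hu1)).exists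
    exact ⟨x, hx⟩
  obtain ⟨x₀, hx₀⟩ :=
    ((tendsto_cdf_atBot (P.map Y)).eventually (eventually_lt_nhds hu0)).exists
  have hbdd : BddBelow {x : ℝ | u ≤ cdf (P.map Y) x} := by
    refine ⟨x₀, fun x hx => ?_⟩
    by_contra h
    exact absurd (le_trans hx (monotone_cdf _ (le_of_not_ge h))) (not_le.2 hx₀)
  have hVaR : VaR P Y u = sInf {x : ℝ | u ≤ cdf (P.map Y) x} := by
    rw [VaR, fz_var_set hYm]
  constructor
  · intro h
    by_contra hlt
    push_neg at hlt
    have hrc : ContinuousWithinAt (cdf (P.map Y)) (Ioi t) t :=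
      ((cdf (P.map Y)).right_continuous t).mono Ioi_subset_Ici_self
    have hev : ∀ᶠ x in 𝓝[>] t, cdf (P.map Y) x < u :=
      hrc.eventually (eventually_lt_nhds hlt)
    obtain ⟨x, hxlt, hxmem⟩ := (hev.and self_mem_nhdsWithin).exists
    obtain ⟨y, hy, hyx⟩ := exists_lt_of_csInf_lt hne (lt_of_le_of_lt (hVaR ▸ h) hxmem)
    exact absurd (le_trans hy (monotone_cdf _ hyx.le)) (not_le.2 hxlt)
  · intro h
    rw [hVaR]
    exact csInf_le hbdd h

lemma fz_lt_var_iff (hYm : Measurable Y) {u : ℝ} (hu0 : 0 < u) (hu1 : u < 1) (t : ℝ) :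
    t < VaR P Y u ↔ cdf (P.map Y) t < u := by
  rw [← not_le, ← not_le, fz_var_le_iff hYm hu0 hu1]


lemma fz_var_qright (hYm : Measurable Y) {α : ℝ} (hα : α ∈ Ioo (0:ℝ) 1) :
    α ≤ (P {ω | Y ω ≤ VaR P Y α}).toReal := by
  have := (fz_var_le_iff hYm hα.1 hα.2 (VaR P Y α)).1 le_rfl
  rwa [fz_cdf_eq hYm] at this

lemma fz_var_qleft (hYm : Measurable Y) {α : ℝ} (hα : α ∈ Ioo (0:ℝ) 1) :
    (P {ω | Y ω < VaR P Y α}).toReal ≤ α := by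
  set q := VaR P Y α with hq
  have hU : {ω | Y ω < q} = ⋃ n : ℕ, {ω | Y ω ≤ q - 1 / (n + 1)} := by
    ext ω
    simp only [mem_setOf_eq, mem_iUnion]
    constructor
    · intro h
      obtain ⟨n, hn⟩ := exists_nat_one_div_lt (sub_pos.2 h)
      exact ⟨n, by push_cast at hn ⊢; linarith⟩
    · rintro ⟨n, hn⟩
      have : (0:ℝ) < 1 / (n + 1) := by positivity
      linarith
  have hdir : Directed (· ⊆ ·) (fun n : ℕ => {ω | Y ω ≤ q - 1 / (n + 1)}) := by
    apply Monotone.directed_le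
    intro n m hnm ω (h : Y ω ≤ _)
    have h1 : (1:ℝ) / (m + 1) ≤ 1 / (n + 1) := by
      apply one_div_le_one_div_of_le (by positivity) (by have := (Nat.cast_le (α:=ℝ)).2 hnm; linarith)
    exact le_trans h (by linarith)
  have hle : P {ω | Y ω < q} ≤ ENNReal.ofReal α := by
    rw [hU, hdir.measure_iUnion]
    refine iSup_le fun n => ?_
    rw [← fz_ofReal_cdf hYm]
    apply ENNReal.ofReal_le_ofReal
    have hlt : q - 1 / (n + 1) < q := by
      have : (0:ℝ) < 1 / (n + 1) := by positivity
      linarith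
    exact ((fz_lt_var_iff hYm hα.1 hα.2 _).1 hlt).le
  calc (P {ω | Y ω < q}).toReal ≤ (ENNReal.ofReal α).toReal :=
        ENNReal.toReal_mono ENNReal.ofReal_ne_top hle
    _ = α := ENNReal.toReal_ofReal hα.1.le

lemma fz_ind_mul_integrable {p : Ω → Prop} [DecidablePred p] (hp : MeasurableSet {ω | p ω})
    {h : Ω → ℝ} (hh : Integrable h P) :
    Integrable (fun ω => (if p ω then (1:ℝ) else 0) * h ω) P := by
  have : (fun ω => (if p ω then (1:ℝ) else 0) * h ω) = {ω | p ω}.indicator h := by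
    funext ω
    by_cases h' : p ω <;> simp [Set.indicator_apply, h']
  rw [this]
  exact hh.indicator hp

lemma fz_ind_integral {p : Ω → Prop} [DecidablePred p] (hp : MeasurableSet {ω | p ω}) (c : ℝ) :
    ∫ ω, (if p ω then (1:ℝ) else 0) * c ∂P = (P {ω | p ω}).toReal * c := by
  have : (fun ω => (if p ω then (1:ℝ) else 0) * c) = {ω | p ω}.indicator (fun _ => c) := by
    funext ω
    by_cases h' : p ω <;> simp [Set.indicator_apply, h']
  rw [this, integral_indicator_const c hp, smul_eq_mul]
  rfl

lemma fz_quantile_score (hYm : Measurable Y) {α : ℝ} (hα : α ∈ Ioo (0:ℝ) 1)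
    {g : ℝ → ℝ} (hg : Monotone g) (hgY : Integrable (fun ω => g (Y ω)) P)
    {q : ℝ} (hq1 : (P {ω | Y ω < q}).toReal ≤ α) (hq2 : α ≤ (P {ω | Y ω ≤ q}).toReal)
    (a : ℝ) :
    ∫ ω, ((if Y ω ≤ q then (1:ℝ) else 0) - α) * (g q - g (Y ω)) ∂P ≤
      ∫ ω, ((if Y ω ≤ a then (1:ℝ) else 0) - α) * (g a - g (Y ω)) ∂P := by
  set χ : ℝ → Ω → ℝ := fun b ω => if Y ω ≤ b then (1:ℝ) else 0 with hχ
  have hmeas : ∀ b : ℝ, MeasurableSet {ω | Y ω ≤ b} := fun b => measurableSet_le hYm measurable_const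
  have hint : ∀ b : ℝ, Integrable (fun ω => (χ b ω - α) * (g b - g (Y ω))) P := by
    intro b
    have h1 : Integrable (fun ω => g b - g (Y ω)) P := (integrable_const _).sub hgY
    have h2 : Integrable (fun ω => (if Y ω ≤ b then (1:ℝ) else 0) * (g b - g (Y ω))) P :=
      fz_ind_mul_integrable (hmeas _) h1
    have : (fun ω => (χ b ω - α) * (g b - g (Y ω))) =
        (fun ω => (if Y ω ≤ b then (1:ℝ) else 0) * (g b - g (Y ω)) - α * (g b - g (Y ω))) := by
      funext ω; ring
    rw [this]
    exact h2.sub (h1.const_mul α)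
  -- integrability of the "first"-type pieces
  have hfirst_int : ∀ b c : ℝ, Integrable (fun ω => (χ b ω - χ c ω) * (g b - g (Y ω))) P := by
    intro b c
    have h1 : Integrable (fun ω => g b - g (Y ω)) P := (integrable_const _).sub hgY
    have h2 := fz_ind_mul_integrable (p := fun ω => Y ω ≤ b) (hmeas b) h1
    have h3 := fz_ind_mul_integrable (p := fun ω => Y ω ≤ c) (hmeas c) h1
    have : (fun ω => (χ b ω - χ c ω) * (g b - g (Y ω))) =
        (fun ω => (if Y ω ≤ b then (1:ℝ) else 0) * (g b - g (Y ω))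
          - (if Y ω ≤ c then (1:ℝ) else 0) * (g b - g (Y ω))) := by
      funext ω; rw [show (if Y ω ≤ b then (1:ℝ) else 0) = χ b ω from rfl,
        show (if Y ω ≤ c then (1:ℝ) else 0) = χ c ω from rfl]; ring
    rw [this]
    exact h2.sub h3
  have hsecond_int : ∀ b C : ℝ, Integrable (fun ω => (χ b ω - α) * C) P := by
    intro b C
    have : (fun ω => (χ b ω - α) * C) = (fun ω => (if Y ω ≤ b then (1:ℝ) else 0) * C - α * C) := by
      funext ω; ring
    rw [this]
    exact (fz_ind_mul_integrable (hmeas _) (integrable_const _)).sub (integrable_const _)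
  have hsecond_eq : ∀ b C : ℝ, ∫ ω, (χ b ω - α) * C ∂P = ((P {ω | Y ω ≤ b}).toReal - α) * C := by
    intro b C
    have : (fun ω => (χ b ω - α) * C) = (fun ω => (if Y ω ≤ b then (1:ℝ) else 0) * C - α * C) := by
      funext ω; ring
    rw [this, integral_sub (fz_ind_mul_integrable (hmeas b) (integrable_const _))
      (integrable_const _), fz_ind_integral (hmeas b), integral_const]
    simp only [measure_univ, probReal_univ, ENNReal.toReal_one, smul_eq_mul, one_mul]
    ring
  rw [← sub_nonneg, ← integral_sub (hint a) (hint q)]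
  rcases le_or_gt q a with hqa | haq
  · -- q ≤ a
    have hid : (fun ω => (χ a ω - α) * (g a - g (Y ω)) - (χ q ω - α) * (g q - g (Y ω))) =
        (fun ω => (χ a ω - χ q ω) * (g a - g (Y ω)) + (χ q ω - α) * (g a - g q)) := by
      funext ω; ring
    rw [hid, integral_add (hfirst_int a q) (hsecond_int q _)]
    have h1 : 0 ≤ ∫ ω, (χ a ω - χ q ω) * (g a - g (Y ω)) ∂P := by
      apply integral_nonneg
      intro ω
      simp only [hχ]
      rcases le_or_gt (Y ω) q with h | h
      · rw [if_pos h, if_pos (le_trans h hqa)]; ring_nf; exact le_rfl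
      · rcases le_or_gt (Y ω) a with h' | h'
        · rw [if_pos h', if_neg (not_le.2 h)]
          simpa using sub_nonneg.2 (hg h')
        · rw [if_neg (not_le.2 h'), if_neg (not_le.2 h)]; simp
    have h2 : 0 ≤ ∫ ω, (χ q ω - α) * (g a - g q) ∂P := by
      rw [hsecond_eq]
      exact mul_nonneg (by linarith) (sub_nonneg.2 (hg hqa))
    linarith
  · -- a < q
    have hid : (fun ω => (χ a ω - α) * (g a - g (Y ω)) - (χ q ω - α) * (g q - g (Y ω))) =
        (fun ω => (χ a ω - χ q ω) * (g q - g (Y ω)) + (χ a ω - α) * (g a - g q)) := by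
      funext ω; ring
    have hfirst2_int : Integrable (fun ω => (χ a ω - χ q ω) * (g q - g (Y ω))) P := by
      have h1 : Integrable (fun ω => g q - g (Y ω)) P := (integrable_const _).sub hgY
      have h2 := fz_ind_mul_integrable (p := fun ω => Y ω ≤ a) (hmeas a) h1
      have h3 := fz_ind_mul_integrable (p := fun ω => Y ω ≤ q) (hmeas q) h1
      have : (fun ω => (χ a ω - χ q ω) * (g q - g (Y ω))) =
          (fun ω => (if Y ω ≤ a then (1:ℝ) else 0) * (g q - g (Y ω))
            - (if Y ω ≤ q then (1:ℝ) else 0) * (g q - g (Y ω))) := by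
        funext ω; ring
      rw [this]
      exact h2.sub h3
    rw [hid, integral_add hfirst2_int (hsecond_int a _)]
    have hmeas3 : MeasurableSet {ω | a < Y ω ∧ Y ω < q} :=
      (measurableSet_lt measurable_const hYm).inter (measurableSet_lt hYm measurable_const)
    have h3int : Integrable (fun ω => (if a < Y ω ∧ Y ω < q then (1:ℝ) else 0) * (g a - g q)) P :=
      fz_ind_mul_integrable hmeas3 (integrable_const _)
    have hmono : ∀ ω, (if a < Y ω ∧ Y ω < q then (1:ℝ) else 0) * (g a - g q) ≤
        (χ a ω - χ q ω) * (g q - g (Y ω)) := by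
      intro ω
      simp only [hχ]
      rcases le_or_gt (Y ω) a with h | h
      · rw [if_pos h, if_pos (le_trans h haq.le), if_neg (by push_neg; exact fun hc => absurd hc (not_lt.2 h))]
        simp
      · rcases lt_or_ge (Y ω) q with h' | h'
        · rw [if_pos ⟨h, h'⟩, if_neg (not_le.2 h), if_pos h'.le]
          have := hg h.le
          nlinarith
        · rw [if_neg (by push_neg; exact fun _ => h'), if_neg (not_le.2 h)]
          rcases eq_or_lt_of_le h' with he | hlt
          · rw [if_pos he.ge]
            simp [← he]
          · rw [if_neg (not_le.2 hlt)]
            simp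
    have h1 : (P {ω | a < Y ω ∧ Y ω < q}).toReal * (g a - g q) ≤
        ∫ ω, (χ a ω - χ q ω) * (g q - g (Y ω)) ∂P := by
      rw [← fz_ind_integral hmeas3]
      exact integral_mono h3int hfirst2_int hmono
    have h2 := hsecond_eq a (g a - g q)
    have hU : {ω | Y ω < q} = {ω | Y ω ≤ a} ∪ {ω | a < Y ω ∧ Y ω < q} := by
      ext ω
      simp only [mem_setOf_eq, mem_union]
      constructor
      · intro h
        rcases le_or_gt (Y ω) a with h' | h'
        · exact Or.inl h'
        · exact Or.inr ⟨h', h⟩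
      · rintro (h | h)
        · exact lt_of_le_of_lt h haq
        · exact h.2
    have hdisj : Disjoint {ω | Y ω ≤ a} {ω | a < Y ω ∧ Y ω < q} := by
      rw [Set.disjoint_left]
      intro ω h1' h2'
      exact absurd h2'.1 (not_lt.2 h1')
    have hPsplit : (P {ω | Y ω < q}).toReal =
        (P {ω | Y ω ≤ a}).toReal + (P {ω | a < Y ω ∧ Y ω < q}).toReal := by
      rw [hU, measure_union hdisj hmeas3, ENNReal.toReal_add (measure_ne_top P _) (measure_ne_top P _)]
    have hx : g a - g q ≤ 0 := sub_nonpos.2 (hg haq.le)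
    have hbr : (P {ω | Y ω < q}).toReal - α ≤ 0 := sub_nonpos.2 hq1
    have hpos : 0 ≤ ((P {ω | Y ω < q}).toReal - α) * (g a - g q) := by nlinarith
    have hsum : ((P {ω | Y ω ≤ a}).toReal - α) * (g a - g q)
        + (P {ω | a < Y ω ∧ Y ω < q}).toReal * (g a - g q)
        = ((P {ω | Y ω < q}).toReal - α) * (g a - g q) := by
      rw [hPsplit]; ring
    linarith


lemma fz_cvar_integral (hYm : Measurable Y) (hY : Integrable Y P) {α : ℝ}
    (hα : α ∈ Ioo (0:ℝ) 1) :
    ∫ u in α..1, VaR P Y u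
      = ∫ ω, max (Y ω - VaR P Y α) 0 ∂P + VaR P Y α * (1 - α) := by
  set q := VaR P Y α with hqdef
  set F : ℝ → ℝ := fun x => cdf (P.map Y) x with hF
  have hFmono : Monotone F := monotone_cdf _
  have hFmeas : Measurable F := hFmono.measurable
  have hq2 : α ≤ F q := (fz_var_le_iff hYm hα.1 hα.2 q).1 le_rfl
  -- q ≤ VaR u for u in (α, 1)
  have hfq : ∀ u ∈ Ioo α 1, q ≤ VaR P Y u := by
    intro u hu
    by_contra h
    push_neg at h
    have h1 : F (VaR P Y u) < α := (fz_lt_var_iff hYm hα.1 hα.2 _).1 h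
    have h2 : u ≤ F (VaR P Y u) :=
      (fz_var_le_iff hYm (lt_trans hα.1 hu.1) hu.2 _).1 le_rfl
    linarith [hu.1]
  -- the sets
  have hIco : ∀ u ∈ Ioo α 1, {t : ℝ | q ≤ t ∧ F t < u} = Ico q (VaR P Y u) := by
    intro u hu
    ext t
    simp only [mem_setOf_eq, mem_Ico]
    exact and_congr_right fun _ =>
      (fz_lt_var_iff hYm (lt_trans hα.1 hu.1) hu.2 t).symm
  -- the product-set indicator
  set A : Set (ℝ × ℝ) := {p : ℝ × ℝ | q ≤ p.2 ∧ F p.2 < p.1} with hA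
  have hAmeas : MeasurableSet A :=
    (measurableSet_le measurable_const measurable_snd).inter
      (measurableSet_lt (hFmeas.comp measurable_snd) measurable_fst)
  set H : ℝ × ℝ → ENNReal := A.indicator 1 with hH
  have hHmeas : Measurable H := measurable_one.indicator hAmeas
  -- swap
  have hswap : ∫⁻ u in Ioo α 1, ∫⁻ t, H (u, t) ∂volume ∂volume
      = ∫⁻ t, ∫⁻ u in Ioo α 1, H (u, t) ∂volume ∂volume := by
    apply lintegral_lintegral_swap
    exact (hHmeas.comp (measurable_fst.prodMk measurable_snd)).aemeasurable
  -- LHS of swap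
  have hLHS : ∫⁻ u in Ioo α 1, ∫⁻ t, H (u, t) ∂volume ∂volume
      = ∫⁻ u in Ioo α 1, ENNReal.ofReal (VaR P Y u - q) ∂volume := by
    apply setLIntegral_congr_fun measurableSet_Ioo
    intro u hu
    have h1 : (fun t => H (u, t)) = ({t : ℝ | q ≤ t ∧ F t < u}).indicator 1 := by
      funext t
      by_cases h' : q ≤ t ∧ F t < u
      · simp [hH, hA, Set.indicator_apply, h']
      · simp [hH, hA, Set.indicator_apply, h']
    beta_reduce
    rw [h1, hIco u hu]
    rw [lintegral_indicator measurableSet_Ico]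
    simp [Real.volume_Ico]
  -- RHS of swap
  have hRHS : ∫⁻ t, ∫⁻ u in Ioo α 1, H (u, t) ∂volume ∂volume
      = ∫⁻ t in Ici q, ENNReal.ofReal (1 - F t) ∂volume := by
    have h1 : ∀ t : ℝ, ∫⁻ u in Ioo α 1, H (u, t) ∂volume
        = (Ici q).indicator (fun t => ENNReal.ofReal (1 - F t)) t := by
      intro t
      by_cases hqt : q ≤ t
      · have hFt : α ≤ F t := le_trans hq2 (hFmono hqt)
        have h2 : (fun u => H (u, t)) = (Ioi (F t)).indicator 1 := by
          funext u
          by_cases h' : F t < u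
          · simp [hH, hA, Set.indicator_apply, h', hqt, Set.mem_Ioi]
          · simp [hH, hA, Set.indicator_apply, h', hqt, Set.mem_Ioi]
        rw [h2, lintegral_indicator_one measurableSet_Ioi,
          Measure.restrict_apply measurableSet_Ioi]
        have h3 : Ioi (F t) ∩ Ioo α 1 = Ioo (F t) 1 := by
          ext u
          simp only [mem_inter_iff, mem_Ioo, mem_Ioi]
          constructor
          · rintro ⟨hu3, ⟨_, hu2⟩⟩
            exact ⟨hu3, hu2⟩
          · rintro ⟨hu1, hu2⟩
            exact ⟨hu1, ⟨lt_of_le_of_lt hFt hu1, hu2⟩⟩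
        rw [h3, Real.volume_Ioo, Set.indicator_of_mem (mem_Ici.2 hqt)]
      · have h2 : (fun u => H (u, t)) = (fun _ => 0) := by
          funext u
          simp [hH, hA, Set.indicator_apply, hqt]
        rw [h2, lintegral_zero]
        exact (Set.indicator_of_notMem (fun h => hqt (mem_Ici.1 h)) _).symm
    rw [lintegral_congr h1, lintegral_indicator measurableSet_Ici]
  -- the common value
  set Λ : ENNReal := ∫⁻ t in Ici q, ENNReal.ofReal (1 - F t) ∂volume with hΛ
  -- layer cake for the expectation side
  have hmaxmeas : Measurable (fun ω => max (Y ω - q) 0) :=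
    (hYm.sub measurable_const).max measurable_const
  have hmaxint : Integrable (fun ω => max (Y ω - q) 0) P :=
    (hY.sub (integrable_const q)).pos_part
  have hexp : ∫⁻ ω, ENNReal.ofReal (max (Y ω - q) 0) ∂P = Λ := by
    rw [lintegral_eq_lintegral_meas_lt (f := fun ω => max (Y ω - q) 0) P
      (ae_of_all _ fun ω => le_max_right _ _) hmaxmeas.aemeasurable]
    have hcong : ∀ s ∈ Ioi (0:ℝ), P {ω | s < max (Y ω - q) 0}
        = ENNReal.ofReal (1 - F (s + q)) := by
      intro s hs
      have hset : {ω | s < max (Y ω - q) 0} = {ω | Y ω ≤ s + q}ᶜ := by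
        ext ω
        simp only [mem_setOf_eq, mem_compl_iff, not_le, lt_max_iff]
        constructor
        · rintro (h | h)
          · linarith
          · linarith [mem_Ioi.1 hs]
        · intro h
          exact Or.inl (by linarith)
      rw [hset, prob_compl_eq_one_sub (measurableSet_le hYm measurable_const), ← fz_ofReal_cdf hYm,
        ENNReal.ofReal_sub 1 (cdf_nonneg _ _), ENNReal.ofReal_one]

    rw [setLIntegral_congr_fun measurableSet_Ioi hcong]
    have hshift : ∫⁻ s in Ioi (0:ℝ), ENNReal.ofReal (1 - F (s + q)) ∂volume
        = ∫⁻ t in Ioi q, ENNReal.ofReal (1 - F t) ∂volume := by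
      have h := (measurePreserving_add_right (volume : Measure ℝ) q).setLIntegral_comp_preimage_emb
        (measurableEmbedding_addRight q) (fun t => ENNReal.ofReal (1 - F t)) (Ioi q)
      have hpre : (fun x => x + q) ⁻¹' Ioi q = Ioi 0 := by
        ext x; simp [mem_Ioi]
      rwa [hpre] at h
    rw [hshift, hΛ, Measure.restrict_congr_set MeasureTheory.Ioi_ae_eq_Ici]
  have hfin : Λ ≠ ⊤ := by
    rw [← hexp]
    exact hmaxint.lintegral_lt_top.ne
  -- identification of VaR on Ioo α 1
  set T : ℝ → ENNReal := fun u => volume {t : ℝ | q ≤ t ∧ F t < u} with hT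
  have hTmono : Monotone T := by
    intro u v huv
    apply measure_mono
    intro t ht
    exact ⟨ht.1, lt_of_lt_of_le ht.2 huv⟩
  set g0 : ℝ → ℝ := fun u => q + (T u).toReal with hg0
  have hg0meas : Measurable g0 :=
    measurable_const.add hTmono.measurable.ennreal_toReal
  have hgIoo : ∀ u ∈ Ioo α 1, VaR P Y u = g0 u := by
    intro u hu
    rw [hg0]
    simp only [hT]
    rw [hIco u hu, Real.volume_Ico, ENNReal.toReal_ofReal (sub_nonneg.2 (hfq u hu))]
    ring
  have haeIoo : ∀ᵐ u ∂(volume.restrict (Ioc α 1)), u ∈ Ioo α 1 := by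
    rw [← Measure.restrict_congr_set MeasureTheory.Ioo_ae_eq_Ioc]
    exact ae_restrict_mem measurableSet_Ioo
  have hfae : (fun u => VaR P Y u) =ᵐ[volume.restrict (Ioc α 1)] g0 := by
    filter_upwards [haeIoo] with u hu
    exact hgIoo u hu
  have hfaesm : AEStronglyMeasurable (fun u => VaR P Y u) (volume.restrict (Ioc α 1)) :=
    hg0meas.aestronglyMeasurable.congr hfae.symm
  have hnn : 0 ≤ᵐ[volume.restrict (Ioc α 1)] fun u => VaR P Y u - q := by
    filter_upwards [haeIoo] with u hu
    exact sub_nonneg.2 (hfq u hu)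
  have hlin : ∫⁻ u in Ioc α 1, ENNReal.ofReal (VaR P Y u - q) ∂volume = Λ := by
    rw [← Measure.restrict_congr_set MeasureTheory.Ioo_ae_eq_Ioc, ← hLHS, hswap, hRHS]
  have hsubint : IntegrableOn (fun u => VaR P Y u - q) (Ioc α 1) volume := by
    refine ⟨hfaesm.sub aestronglyMeasurable_const, ?_⟩
    rw [hasFiniteIntegral_iff_ofReal hnn, hlin]
    exact hfin.lt_top
  have hVint : IntegrableOn (fun u => VaR P Y u) (Ioc α 1) volume := by
    have : (fun u => VaR P Y u) = (fun u => (VaR P Y u - q) + q) := by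
      funext u; ring
    rw [this]
    exact hsubint.add (integrableOn_const measure_Ioc_lt_top.ne)
  have hvol : (volume (Ioc α 1)).toReal = 1 - α := by
    rw [Real.volume_Ioc, ENNReal.toReal_ofReal (by linarith [hα.2])]
  have hsubval : ∫ u in Ioc α 1, (VaR P Y u - q) ∂volume = Λ.toReal := by
    rw [integral_eq_lintegral_of_nonneg_ae hnn (hfaesm.sub aestronglyMeasurable_const), hlin]
  have hexpval : ∫ ω, max (Y ω - q) 0 ∂P = Λ.toReal := by
    rw [integral_eq_lintegral_of_nonneg_ae (f := fun ω => max (Y ω - q) 0)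
      (ae_of_all _ fun ω => le_max_right _ _) hmaxmeas.aestronglyMeasurable, hexp]
  rw [intervalIntegral.integral_of_le hα.2.le]
  have hsplit : ∫ u in Ioc α 1, VaR P Y u ∂volume
      = ∫ u in Ioc α 1, (VaR P Y u - q) ∂volume + ∫ u in Ioc α 1, (q : ℝ) ∂volume := by
    rw [← integral_add hsubint (integrableOn_const measure_Ioc_lt_top.ne)]
    congr 1
    funext u
    ring
  rw [hsplit, hsubval, hexpval, setIntegral_const, measureReal_def, hvol, smul_eq_mul]
  ring

lemma fz_score_integral (hYm : Measurable Y) (hY : Integrable Y P) {α : ℝ}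
    (hα : α ∈ Ioo (0:ℝ) 1) (G₁ G₂ G₂' : ℝ → ℝ)
    (hG₁Y : Integrable (fun ω => G₁ (Y ω)) P) (hG₂Y : Integrable (fun ω => G₂ (Y ω)) P)
    (S : ℝ → ℝ → ℝ → ℝ)
    (hS : ∀ a₁ a₂ y : ℝ, S a₁ a₂ y =
      ((if y ≤ a₁ then (1:ℝ) else 0) - α) * (G₁ a₁ - G₁ y) - G₂ a₂ + G₂ y
        + G₂' a₂ * (a₂ + (1 - α)⁻¹ *
            (((if a₁ < y then (1:ℝ) else 0) - (1 - α)) * a₁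
              - (if a₁ < y then (1:ℝ) else 0) * y)))
    (a b : ℝ) :
    ∫ ω, S a b (Y ω) ∂P
      = (∫ ω, ((if Y ω ≤ a then (1:ℝ) else 0) - α) * (G₁ a - G₁ (Y ω)) ∂P)
        + (∫ ω, G₂ (Y ω) ∂P) - G₂ b + G₂' b * (b - a)
        - G₂' b * (1 - α)⁻¹ * ∫ ω, max (Y ω - a) 0 ∂P := by
  have hne : (1:ℝ) - α ≠ 0 := ne_of_gt (by linarith [hα.2])
  have key : ∀ y : ℝ, S a b y =
      ((if y ≤ a then (1:ℝ) else 0) - α) * (G₁ a - G₁ y) + (G₂ y - G₂ b)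
        + G₂' b * (b - a) + (-(G₂' b * (1 - α)⁻¹)) * max (y - a) 0 := by
    intro y
    rw [hS]
    rcases le_or_gt y a with h | h
    · rw [if_pos h, if_neg (not_lt.2 h), max_eq_right (by linarith)]
      field_simp
      ring
    · rw [if_neg (not_le.2 h), if_pos h, max_eq_left (by linarith)]
      field_simp
      ring
  have h1 : Integrable (fun ω => ((if Y ω ≤ a then (1:ℝ) else 0) - α) * (G₁ a - G₁ (Y ω))) P := by
    have hint : Integrable (fun ω => G₁ a - G₁ (Y ω)) P := (integrable_const _).sub hG₁Y
    have h2 := fz_ind_mul_integrable (p := fun ω => Y ω ≤ a)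
      (measurableSet_le hYm measurable_const) hint
    have : (fun ω => ((if Y ω ≤ a then (1:ℝ) else 0) - α) * (G₁ a - G₁ (Y ω)))
        = (fun ω => (if Y ω ≤ a then (1:ℝ) else 0) * (G₁ a - G₁ (Y ω))
            - α * (G₁ a - G₁ (Y ω))) := by
      funext ω; ring
    rw [this]
    exact h2.sub (hint.const_mul α)
  have h2 : Integrable (fun ω => G₂ (Y ω) - G₂ b) P := hG₂Y.sub (integrable_const _)
  have h4 : Integrable (fun ω => (-(G₂' b * (1 - α)⁻¹)) * max (Y ω - a) 0) P :=
    ((hY.sub (integrable_const a)).pos_part).const_mul _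
  have hfun : (fun ω => S a b (Y ω)) = (fun ω =>
      ((if Y ω ≤ a then (1:ℝ) else 0) - α) * (G₁ a - G₁ (Y ω)) + (G₂ (Y ω) - G₂ b)
        + G₂' b * (b - a) + (-(G₂' b * (1 - α)⁻¹)) * max (Y ω - a) 0) := by
    funext ω; exact key (Y ω)
  rw [hfun]
  rw [integral_add (f := fun ω => ((if Y ω ≤ a then (1:ℝ) else 0) - α) * (G₁ a - G₁ (Y ω))
        + (G₂ (Y ω) - G₂ b) + G₂' b * (b - a))
      (g := fun ω => (-(G₂' b * (1 - α)⁻¹)) * max (Y ω - a) 0)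
      ((h1.add h2).add (integrable_const _)) h4]
  rw [integral_add (f := fun ω => ((if Y ω ≤ a then (1:ℝ) else 0) - α) * (G₁ a - G₁ (Y ω))
        + (G₂ (Y ω) - G₂ b)) (g := fun _ => G₂' b * (b - a))
      (h1.add h2) (integrable_const _)]
  rw [integral_add (f := fun ω => ((if Y ω ≤ a then (1:ℝ) else 0) - α) * (G₁ a - G₁ (Y ω)))
      (g := fun ω => G₂ (Y ω) - G₂ b) h1 h2]
  rw [integral_sub hG₂Y (integrable_const _), integral_const, integral_const,
    integral_const_mul]
  simp only [measure_univ, probReal_univ, ENNReal.toReal_one, smul_eq_mul, one_mul]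
  ring

end FZAux

/-- The Fissler–Ziegel scoring function is consistent for the pair `(VaR_α, CVaR_α)`. -/
theorem var_cvar_score_consistent {Ω : Type*} [MeasurableSpace Ω] (P : Measure Ω)
    [IsProbabilityMeasure P] (α : ℝ) (hα : α ∈ Set.Ioo (0:ℝ) 1)
    (Y : Ω → ℝ) (hYm : Measurable Y) (hY : Integrable Y P)
    (huniq : ∃! q : ℝ, IsQuantile P Y α q)
    (G₁ G₂ G₂' : ℝ → ℝ)
    -- G₂ is convex with subgradient G₂'
    (hG₂ : ∀ x y : ℝ, G₂ x + G₂' x * (y - x) ≤ G₂ y)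
    -- for every 𝔞₂, the map x ↦ G₁(x) − (x/(1−α)) G₂'(𝔞₂) is increasing
    (hG₁ : ∀ a₂ : ℝ, Monotone (fun x => G₁ x - x / (1 - α) * G₂' a₂))
    (hG₁Y : Integrable (fun ω => G₁ (Y ω)) P)
    (hG₂Y : Integrable (fun ω => G₂ (Y ω)) P)
    (S : ℝ → ℝ → ℝ → ℝ)
    (hS : ∀ a₁ a₂ y : ℝ, S a₁ a₂ y =
      ((if y ≤ a₁ then (1:ℝ) else 0) - α) * (G₁ a₁ - G₁ y) - G₂ a₂ + G₂ y
        + G₂' a₂ * (a₂ + (1 - α)⁻¹ *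
            (((if a₁ < y then (1:ℝ) else 0) - (1 - α)) * a₁
              - (if a₁ < y then (1:ℝ) else 0) * y))) :
    ∀ a₁ a₂ : ℝ, a₁ ≤ a₂ →
      ∫ ω, S (VaR P Y α) (CVaR P Y α) (Y ω) ∂P ≤ ∫ ω, S a₁ a₂ (Y ω) ∂P := by
  intro a₁ a₂ h12
  have hne : (1:ℝ) - α ≠ 0 := ne_of_gt (by linarith [hα.2])
  have hq1 := fz_var_qleft (P := P) hYm hα
  have hq2 := fz_var_qright (P := P) hYm hα
  set q := VaR P Y α with hqdef
  have hcv : CVaR P Y α = q + (1 - α)⁻¹ * ∫ ω, max (Y ω - q) 0 ∂P := by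
    unfold CVaR
    rw [fz_cvar_integral hYm hY hα]
    field_simp
    ring
  set g : ℝ → ℝ := fun x => G₁ x - x / (1 - α) * G₂' a₂ with hg
  have hgY : Integrable (fun ω => g (Y ω)) P :=
    hG₁Y.sub ((hY.div_const _).mul_const _)
  have hcore := fz_quantile_score hYm hα (hG₁ a₂) hgY hq1 hq2 a₁
  have hbridge : ∀ p : ℝ,
      ∫ ω, ((if Y ω ≤ p then (1:ℝ) else 0) - α) * (g p - g (Y ω)) ∂P
        = (∫ ω, ((if Y ω ≤ p then (1:ℝ) else 0) - α) * (G₁ p - G₁ (Y ω)) ∂P)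
          - G₂' a₂ * (1 - α)⁻¹ * (∫ ω, max (Y ω - p) 0 ∂P) - G₂' a₂ * p
          + G₂' a₂ * (∫ ω, Y ω ∂P) := by
    intro p
    have key : ∀ y : ℝ, ((if y ≤ p then (1:ℝ) else 0) - α) * (g p - g y)
        = ((if y ≤ p then (1:ℝ) else 0) - α) * (G₁ p - G₁ y)
          + (-(G₂' a₂ * (1 - α)⁻¹)) * max (y - p) 0 + G₂' a₂ * y + (-(G₂' a₂ * p)) := by
      intro y
      simp only [hg]
      rcases le_or_gt y p with h | h
      · rw [if_pos h, max_eq_right (by linarith)]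
        field_simp
        ring
      · rw [if_neg (not_le.2 h), max_eq_left (by linarith)]
        field_simp
        ring
    have h1 : Integrable (fun ω => ((if Y ω ≤ p then (1:ℝ) else 0) - α) * (G₁ p - G₁ (Y ω))) P := by
      have hint : Integrable (fun ω => G₁ p - G₁ (Y ω)) P := (integrable_const _).sub hG₁Y
      have h2 := fz_ind_mul_integrable (p := fun ω => Y ω ≤ p)
        (measurableSet_le hYm measurable_const) hint
      have : (fun ω => ((if Y ω ≤ p then (1:ℝ) else 0) - α) * (G₁ p - G₁ (Y ω)))
          = (fun ω => (if Y ω ≤ p then (1:ℝ) else 0) * (G₁ p - G₁ (Y ω))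
              - α * (G₁ p - G₁ (Y ω))) := by
        funext ω; ring
      rw [this]
      exact h2.sub (hint.const_mul α)
    have h4 : Integrable (fun ω => (-(G₂' a₂ * (1 - α)⁻¹)) * max (Y ω - p) 0) P :=
      ((hY.sub (integrable_const p)).pos_part).const_mul _
    have h5 : Integrable (fun ω => G₂' a₂ * Y ω) P := hY.const_mul _
    have hfun : (fun ω => ((if Y ω ≤ p then (1:ℝ) else 0) - α) * (g p - g (Y ω)))
        = (fun ω => ((if Y ω ≤ p then (1:ℝ) else 0) - α) * (G₁ p - G₁ (Y ω))
            + (-(G₂' a₂ * (1 - α)⁻¹)) * max (Y ω - p) 0 + G₂' a₂ * Y ω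
            + (-(G₂' a₂ * p))) := by
      funext ω; exact key (Y ω)
    rw [hfun]
    rw [integral_add (f := fun ω => ((if Y ω ≤ p then (1:ℝ) else 0) - α) * (G₁ p - G₁ (Y ω))
          + (-(G₂' a₂ * (1 - α)⁻¹)) * max (Y ω - p) 0 + G₂' a₂ * Y ω)
        (g := fun _ => -(G₂' a₂ * p)) ((h1.add h4).add h5) (integrable_const _)]
    rw [integral_add (f := fun ω => ((if Y ω ≤ p then (1:ℝ) else 0) - α) * (G₁ p - G₁ (Y ω))
          + (-(G₂' a₂ * (1 - α)⁻¹)) * max (Y ω - p) 0)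
        (g := fun ω => G₂' a₂ * Y ω) (h1.add h4) h5]
    rw [integral_add (f := fun ω => ((if Y ω ≤ p then (1:ℝ) else 0) - α) * (G₁ p - G₁ (Y ω)))
        (g := fun ω => (-(G₂' a₂ * (1 - α)⁻¹)) * max (Y ω - p) 0) h1 h4]
    rw [integral_const_mul, integral_const_mul, integral_const]
    simp only [measure_univ, probReal_univ, ENNReal.toReal_one, smul_eq_mul, one_mul]
    ring
  rw [fz_score_integral hYm hY hα G₁ G₂ G₂' hG₁Y hG₂Y S hS a₁ a₂,
      fz_score_integral hYm hY hα G₁ G₂ G₂' hG₁Y hG₂Y S hS q (CVaR P Y α)]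
  have hb1 := hbridge q
  have hb2 := hbridge a₁
  rw [hb1, hb2] at hcore
  have hsub := hG₂ a₂ (CVaR P Y α)
  set c := CVaR P Y α with hcdef
  have h0 : G₂' c * (c - q) - G₂' c * (1 - α)⁻¹ * ∫ ω, max (Y ω - q) 0 ∂P = 0 := by
    rw [hcv]; ring
  have h3 : G₂' a₂ * (c - a₂)
      = G₂' a₂ * q + G₂' a₂ * ((1 - α)⁻¹ * ∫ ω, max (Y ω - q) 0 ∂P) - G₂' a₂ * a₂ := by
    rw [hcv]; ring
  linarith [hcore, hsub, h0, h3]
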